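/- arXiv:1512.00501 — 4 statements merged into one kernel-verified Lean document; each statement's English description precedes it below -/
import Mathlib

section
/- Let N and k be natural numbers with 1 ≤ k ≤ N. For every index x : Fin N, the number of choice sequences that select x, multiplied by N, equals k times the total number of choice sequences ∏_{t=0}^{k−1}(N−t). Equivalently, under the uniform distribution on choice sequences, each index x is selected with probability exactly k/N. -/
/-- The permutation of `Fin N` produced by `k` iterations of the partial
Fisher–Yates shuffle driven by the choice sequence `j`: iteration `t`
(for `t = 0, …, k-1`) swaps the array entries at positions `N-1-t` and
`j t`, the iterations being performed left-to-right (`t = 0` first).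
As a permutation this is `swap (N-1) (j 0) * ⋯ * swap (N-1-(k-1)) (j (k-1))`,
so that `fyPerm N k j p` is the final content of array slot `p` when the
array is initialized with `a[p] = p`. -/
def fyPerm (N k : ℕ) (j : ∀ t : Fin k, Fin (N - (t : ℕ))) : Equiv.Perm (Fin N) :=
  (List.ofFn fun t : Fin k =>
      Equiv.swap
        (⟨N - 1 - (t : ℕ), by have := (j t).isLt; omega⟩ : Fin N)
        (⟨((j t) : ℕ), by have := (j t).isLt; omega⟩ : Fin N)).prod
theorem fyPerm_snoc (N k : ℕ) (hkN : k + 1 ≤ N)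
    (j' : ∀ t : Fin k, Fin (N - (t : ℕ))) (b : Fin (N - k)) :
    fyPerm N (k+1) (Fin.snoc j' b) =
      fyPerm N k j' *
        Equiv.swap (⟨N - 1 - k, by omega⟩ : Fin N)
          (⟨(b : ℕ), by have := b.isLt; omega⟩ : Fin N) := by
  unfold fyPerm
  rw [List.ofFn_succ', List.concat_eq_append, List.prod_append, List.prod_singleton]
  congr 1
  · refine congrArg List.prod (congrArg List.ofFn (funext fun t => ?_))
    have h1 : Fin.snoc (α := fun t : Fin (k+1) => Fin (N - (t : ℕ))) j' b t.castSucc = j' t :=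
      Fin.snoc_castSucc ..
    simp only [h1, Fin.coe_castSucc]
  · have h2 : Fin.snoc (α := fun t : Fin (k+1) => Fin (N - (t : ℕ))) j' b (Fin.last k) = b :=
      Fin.snoc_last ..
    simp only [h2, Fin.val_last]

theorem swap_char (N k : ℕ) (hkN : k + 1 ≤ N) (b y : Fin N) (hb : (b : ℕ) ≤ N - 1 - k) :
    N - 1 - k ≤ ((Equiv.swap (⟨N - 1 - k, by omega⟩ : Fin N) b) y : ℕ) ↔
      (N - k ≤ (y : ℕ) ∨ (b : ℕ) = (y : ℕ)) := by
  rcases eq_or_ne y ⟨N - 1 - k, by omega⟩ with rfl | h1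
  · rw [Equiv.swap_apply_left]
    have : ((⟨N - 1 - k, by omega⟩ : Fin N) : ℕ) = N - 1 - k := rfl
    rw [this]
    omega
  · rcases eq_or_ne y b with rfl | h2
    · rw [Equiv.swap_apply_right]
      have : ((⟨N - 1 - k, by omega⟩ : Fin N) : ℕ) = N - 1 - k := rfl
      rw [this]
      omega
    · rw [Equiv.swap_apply_of_ne_of_ne h1 h2]
      simp only [Fin.ext_iff, ne_eq] at h1 h2
      omega

theorem fy_count_aux (N : ℕ) (x : Fin N) :
    ∀ k, k ≤ N →
    (Finset.univ.filter fun j : ∀ t : Fin k, Fin (N - (t : ℕ)) =>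
        N - k ≤ (((fyPerm N k j)⁻¹ x : Fin N) : ℕ)).card * N
      = k * ∏ t ∈ Finset.range k, (N - t) := by
  intro k
  induction k with
  | zero =>
    intro _
    have h0 : (Finset.univ.filter fun j : ∀ t : Fin 0, Fin (N - (t : ℕ)) =>
        N - 0 ≤ (((fyPerm N 0 j)⁻¹ x : Fin N) : ℕ)).card = 0 := by
      rw [Finset.card_eq_zero, Finset.filter_eq_empty_iff]
      intro j _
      have := (((fyPerm N 0 j)⁻¹ x : Fin N)).isLt
      omega
    rw [h0]
    simp
  | succ k ih =>
    intro hkN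
    have hk : k ≤ N := by omega
    have IH := ih hk
    set T := ∏ t ∈ Finset.range k, (N - t) with hT
    have hcardT : Fintype.card (∀ t : Fin k, Fin (N - (t : ℕ))) = T := by
      rw [Fintype.card_pi]
      simp only [Fintype.card_fin]
      rw [hT, ← Fin.prod_univ_eq_prod_range]
    set c := (Finset.univ.filter fun j : ∀ t : Fin k, Fin (N - (t : ℕ)) =>
        N - k ≤ (((fyPerm N k j)⁻¹ x : Fin N) : ℕ)).card with hc
    have hcT : c ≤ T := by
      rw [hc, ← hcardT, ← Finset.card_univ]
      exact Finset.card_filter_le _ _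
    have key : (Finset.univ.filter fun j : ∀ t : Fin (k+1), Fin (N - (t : ℕ)) =>
        N - (k+1) ≤ (((fyPerm N (k+1) j)⁻¹ x : Fin N) : ℕ)).card
        = (N - k) * c + (T - c) := by
      classical
      -- transfer to the product type via snocEquiv
      set e : (Fin (N - k) × ∀ t : Fin k, Fin (N - (t : ℕ))) ≃ (∀ t : Fin (k+1), Fin (N - (t : ℕ))) :=
        Fin.snocEquiv (fun t : Fin (k+1) => Fin (N - (t : ℕ))) with he
      -- the permutation splits
      have hsplit : ∀ (b : Fin (N - k)) (j' : ∀ t : Fin k, Fin (N - (t : ℕ))),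
          (N - (k+1) ≤ (((fyPerm N (k+1) (e (b, j')))⁻¹ x : Fin N) : ℕ)) ↔
          (N - k ≤ (((fyPerm N k j')⁻¹ x : Fin N) : ℕ) ∨
            (b : ℕ) = (((fyPerm N k j')⁻¹ x : Fin N) : ℕ)) := by
        intro b j'
        have hbN := b.isLt
        have hE : e (b, j') = Fin.snoc j' b := rfl
        rw [hE, fyPerm_snoc N k hkN j' b, mul_inv_rev, Equiv.Perm.mul_apply]
        rw [Equiv.swap_inv]
        have h := swap_char N k hkN ⟨(b : ℕ), by omega⟩ ((fyPerm N k j')⁻¹ x)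
          (by simp; omega)
        constructor
        · intro hle
          exact h.1 (by omega)
        · intro hr
          have := h.2 hr
          omega
      -- count
      rw [Finset.card_filter,
        ← Equiv.sum_comp e (fun j : ∀ t : Fin (k+1), Fin (N - (t : ℕ)) =>
          if N - (k+1) ≤ (((fyPerm N (k+1) j)⁻¹ x : Fin N) : ℕ) then (1:ℕ) else 0),
        Fintype.sum_prod_type_right]
      have hinner : ∀ j' : ∀ t : Fin k, Fin (N - (t : ℕ)),
          (∑ b : Fin (N - k), if N - (k+1) ≤ (((fyPerm N (k+1) (e (b, j')))⁻¹ x : Fin N) : ℕ)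
            then 1 else 0)
          = if N - k ≤ (((fyPerm N k j')⁻¹ x : Fin N) : ℕ) then N - k else 1 := by
        intro j'
        by_cases hsel : N - k ≤ (((fyPerm N k j')⁻¹ x : Fin N) : ℕ)
        · rw [if_pos hsel]
          have : ∀ b : Fin (N - k),
              (if N - (k+1) ≤ (((fyPerm N (k+1) (e (b, j')))⁻¹ x : Fin N) : ℕ)
                then (1:ℕ) else 0) = 1 := fun b => if_pos ((hsplit b j').2 (Or.inl hsel))
          rw [Finset.sum_congr rfl fun b _ => this b]
          simp
        · rw [if_neg hsel]
          set y := (((fyPerm N k j')⁻¹ x : Fin N) : ℕ) with hy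
          have hylt : y < N - k := by omega
          have heach : ∀ b : Fin (N - k),
              (if N - (k+1) ≤ (((fyPerm N (k+1) (e (b, j')))⁻¹ x : Fin N) : ℕ)
                then (1:ℕ) else 0) = if b = (⟨y, hylt⟩ : Fin (N - k)) then 1 else 0 := by
            intro b
            congr 1
            rw [eq_iff_iff, hsplit b j']
            constructor
            · rintro (h | h)
              · omega
              · exact Fin.ext h
            · intro h; right; rw [h]
          rw [Finset.sum_congr rfl fun b _ => heach b, Finset.sum_ite_eq' _ _ (fun _ => 1)]
          simp
      refine Eq.trans (Finset.sum_congr rfl fun j' _ => hinner j') ?_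
      rw [Finset.sum_ite, Finset.sum_const, Finset.sum_const, smul_eq_mul, smul_eq_mul, mul_one]
      have hfn : (Finset.univ.filter fun j' : ∀ t : Fin k, Fin (N - (t : ℕ)) =>
          ¬ N - k ≤ (((fyPerm N k j')⁻¹ x : Fin N) : ℕ)).card = T - c := by
        rw [Finset.filter_not, Finset.card_sdiff_of_subset (Finset.filter_subset _ _), ← hc,
          Finset.card_univ, hcardT]
      rw [hfn, ← hc, mul_comm]
    rw [key, Finset.prod_range_succ, ← hT]
    have IHz : (c : ℤ) * N = k * T := by exact_mod_cast IH
    have hz : (((N - k) * c + (T - c)) * N : ℤ) = (k+1) * (T * (N - k)) := by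
      push_cast [hk, hcT]
      linear_combination ((N : ℤ) - k - 1) * IHz
    exact_mod_cast hz


/-- Each index `x : Fin N` is selected by the partial Fisher–Yates shuffle
(`x` ends in one of the last `k` array positions, i.e.
`(fyPerm N k j)⁻¹ x ≥ N - k`) with probability exactly `k / N`: the number
of choice sequences selecting `x`, multiplied by `N`, equals `k` times the
total number `∏_{t<k} (N - t)` of choice sequences. -/
theorem fy_selected_count (N k : ℕ) (hk : 1 ≤ k) (hkN : k ≤ N) (x : Fin N) :
    (Finset.univ.filter fun j : ∀ t : Fin k, Fin (N - (t : ℕ)) =>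
        N - k ≤ (((fyPerm N k j)⁻¹ x : Fin N) : ℕ)).card * N
      = k * ∏ t ∈ Finset.range k, (N - t) := by
  exact fy_count_aux N x k hkN
end

section
/- Let N, m be natural numbers with m < N. Fix an index x : Fin N and a choice sequence j of length m after which x is not selected (i.e. π_j⁻¹ x < N − m). Among the N − m possible draws j' : Fin (N − m) extending the sequence to length m+1 (iteration m+1 swaps positions N−1−m and j'), exactly one draw causes x to become selected, namely j' equal to the current position π_j⁻¹ x of x. Hence the conditional probability that x is selected at iteration m+1, given that it was not selected during the first m iterations, is 1/(N − m). -/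
/-- Conditional selection probability at iteration `m+1`: if after the first
`m` iterations the index `x` is not yet selected (its current position
`(fyPerm N m j)⁻¹ x` is `< N - m`), then among the `N - m` possible draws
`j' : Fin (N - m)` at iteration `m+1` (which further swaps the array
entries at positions `N-1-m` and `j'`, i.e. composes the transposition
`swap (N-1-m) j'` on the right), exactly one draw makes `x` selected
(extended position `≥ N - (m+1)`), namely `j'` equal to the current
position of `x`. Hence the conditional probability is `1 / (N - m)`. -/
theorem fy_conditional_selection (N m : ℕ) (hm : m < N) (x : Fin N)
    (j : ∀ t : Fin m, Fin (N - (t : ℕ)))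
    (hx : (((fyPerm N m j)⁻¹ x : Fin N) : ℕ) < N - m) :
    (Finset.univ.filter fun j' : Fin (N - m) =>
        N - (m + 1) ≤
          (((fyPerm N m j
              * Equiv.swap (⟨N - 1 - m, by omega⟩ : Fin N)
                  (⟨(j' : ℕ), by have := j'.isLt; omega⟩ : Fin N))⁻¹ x : Fin N) : ℕ))
      = {(⟨(((fyPerm N m j)⁻¹ x : Fin N) : ℕ), hx⟩ : Fin (N - m))} := by
  ext j'
  simp only [Finset.mem_filter, Finset.mem_univ, true_and, Finset.mem_singleton,
    mul_inv_rev, Equiv.swap_inv, Equiv.Perm.mul_apply]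
  set p : Fin N := (fyPerm N m j)⁻¹ x with hp
  set a : Fin N := ⟨N - 1 - m, by omega⟩ with ha
  set b : Fin N := ⟨(j' : ℕ), by have := j'.isLt; omega⟩ with hb
  rw [Equiv.swap_apply_def]
  have hfin : (j' = ⟨(p : ℕ), hx⟩) ↔ (j' : ℕ) = (p : ℕ) := by
    rw [Fin.ext_iff]
  rw [hfin]
  split_ifs with h1 h2
  · -- p = a, result is b
    have : (p : ℕ) = N - 1 - m := congrArg Fin.val h1
    have hb' : (b : ℕ) = (j' : ℕ) := rfl
    constructor
    · intro h; have := j'.isLt; omega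
    · intro h; omega
  · -- p = b, result is a
    have : (p : ℕ) = (j' : ℕ) := congrArg Fin.val h2
    constructor
    · intro _; omega
    · intro _; show N - (m + 1) ≤ N - 1 - m; omega
  · -- result is p
    have hpa : (p : ℕ) ≠ N - 1 - m := fun h => h1 (Fin.ext h)
    have hpb : (p : ℕ) ≠ (j' : ℕ) := fun h => h2 (Fin.ext h)
    constructor
    · intro h; omega
    · intro h; omega
end

section
/- Let N and k be natural numbers with k ≤ N. The map sending a choice sequence j to its output tuple (π_j(N−1), π_j(N−2), …, π_j(N−k)) is a bijection from the set of choice sequences onto the set of injective k-tuples of elements of Fin N. Consequently every ordered k-tuple of pairwise distinct indices is produced by exactly one choice sequence, so under uniform choices each such tuple occurs with probability 1/∏_{t=0}^{k−1}(N−t): the partial Fisher–Yates shuffle samples an ordered k-sample from {0,…,N−1} uniformly. -/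
lemma fyPerm_succ (N k : ℕ) (j : ∀ t : Fin (k+1), Fin (N - (t : ℕ))) :
    fyPerm N (k+1) j =
      fyPerm N k (fun t => j t.castSucc) *
        Equiv.swap
          (⟨N - 1 - k, by have := (j (Fin.last k)).isLt; omega⟩ : Fin N)
          (⟨((j (Fin.last k)) : ℕ), by have := (j (Fin.last k)).isLt; omega⟩ : Fin N) := by
  unfold fyPerm
  rw [List.ofFn_succ', List.concat_eq_append, List.prod_append, List.prod_singleton]
  rfl

/-- The output tuple of a choice sequence. -/
def fyOut (N k : ℕ) (hk : k ≤ N) (j : ∀ t : Fin k, Fin (N - (t : ℕ))) :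
    Fin k → Fin N :=
  fun t => fyPerm N k j (⟨N - 1 - (t : ℕ), Nat.lt_of_le_of_lt (Nat.sub_le _ _) (by have := t.isLt; omega)⟩ : Fin N)

lemma fyOut_castSucc (N k : ℕ) (hk : k + 1 ≤ N) (j : ∀ t : Fin (k+1), Fin (N - (t : ℕ)))
    (t : Fin k) :
    fyOut N (k+1) hk j t.castSucc = fyOut N k (by omega) (fun t => j t.castSucc) t := by
  have ht := t.isLt
  have hj := (j (Fin.last k)).isLt
  have hc : ((t.castSucc : Fin (k+1)) : ℕ) = (t : ℕ) := rfl
  have hl : ((Fin.last k : Fin (k+1)) : ℕ) = k := rfl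
  unfold fyOut
  rw [fyPerm_succ, Equiv.Perm.mul_apply, Equiv.swap_apply_of_ne_of_ne]
  · rfl
  · simp only [ne_eq, Fin.mk.injEq, hc, hl] at hj ⊢; omega
  · simp only [ne_eq, Fin.mk.injEq, hc, hl] at hj ⊢; omega

lemma fyOut_last (N k : ℕ) (hk : k + 1 ≤ N) (j : ∀ t : Fin (k+1), Fin (N - (t : ℕ))) :
    fyOut N (k+1) hk j (Fin.last k) =
      fyPerm N k (fun t => j t.castSucc)
        (⟨((j (Fin.last k)) : ℕ), by have := (j (Fin.last k)).isLt; omega⟩ : Fin N) := by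
  unfold fyOut
  rw [fyPerm_succ, Equiv.Perm.mul_apply]
  congr 1
  exact Equiv.swap_apply_left _ _

theorem fy_bij (N : ℕ) : ∀ k (hk : k ≤ N),
    Set.BijOn (fyOut N k hk) Set.univ {f : Fin k → Fin N | Function.Injective f} := by
  intro k
  induction k with
  | zero =>
    intro hk
    refine ⟨fun j _ => ?_, fun j _ j' _ _ => ?_, fun f _ => ?_⟩
    · intro a; exact a.elim0
    · funext t; exact t.elim0
    · refine ⟨fun t => t.elim0, Set.mem_univ _, ?_⟩
      funext t; exact t.elim0
  | succ k IH =>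
    intro hk
    have hk' : k ≤ N := by omega
    obtain ⟨IHmap, IHinj, IHsurj⟩ := IH hk'
    refine ⟨?_, ?_, ?_⟩
    · -- MapsTo: each output tuple is injective
      intro j _
      intro s t hst
      induction s using Fin.lastCases with
      | last =>
        induction t using Fin.lastCases with
        | last => rfl
        | cast t =>
          exfalso
          rw [fyOut_last, fyOut_castSucc] at hst
          have := (fyPerm N k (fun t => j t.castSucc)).injective hst
          have h1 := (j (Fin.last k)).isLt
          have hl : ((Fin.last k : Fin (k+1)) : ℕ) = k := rfl
          have h2 := t.isLt
          have hv := congrArg Fin.val this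
          simp only [Fin.mk.injEq] at hv
          omega
      | cast s =>
        induction t using Fin.lastCases with
        | last =>
          exfalso
          rw [fyOut_last, fyOut_castSucc] at hst
          have := (fyPerm N k (fun t => j t.castSucc)).injective hst.symm
          have h1 := (j (Fin.last k)).isLt
          have hl : ((Fin.last k : Fin (k+1)) : ℕ) = k := rfl
          have h2 := s.isLt
          have hv := congrArg Fin.val this
          simp only [Fin.mk.injEq] at hv
          omega
        | cast t =>
          rw [fyOut_castSucc, fyOut_castSucc] at hst
          have := IHmap (Set.mem_univ _) hst
          exact congrArg Fin.castSucc this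
    · -- InjOn
      intro j _ j' _ h
      have hinit : (fun t : Fin k => j t.castSucc) = (fun t : Fin k => j' t.castSucc) := by
        apply IHinj (Set.mem_univ _) (Set.mem_univ _)
        funext t
        have h1 := congrFun h t.castSucc
        rw [fyOut_castSucc, fyOut_castSucc] at h1
        exact h1
      have hlast := congrFun h (Fin.last k)
      rw [fyOut_last, fyOut_last, hinit] at hlast
      have := (fyPerm N k (fun t => j' t.castSucc)).injective hlast
      have hval : ((j (Fin.last k)) : ℕ) = ((j' (Fin.last k)) : ℕ) := by
        simpa using this
      funext t
      induction t using Fin.lastCases with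
      | last => exact Fin.ext hval
      | cast t => exact congrFun hinit t
    · -- SurjOn
      intro f hf
      obtain ⟨j', -, hj'⟩ := IHsurj
        (show f ∘ Fin.castSucc ∈ {g : Fin k → Fin N | Function.Injective g} from
          hf.comp (Fin.castSucc_injective k))
      set σ := fyPerm N k j' with hσ
      set x := σ⁻¹ (f (Fin.last k)) with hx
      have hxlt : (x : ℕ) < N - k := by
        by_contra hge
        push_neg at hge
        have hxN := x.isLt
        have ht : N - 1 - (x : ℕ) < k := by omega
        have hxeq : (⟨N - 1 - (N - 1 - (x : ℕ)), by omega⟩ : Fin N) = x := by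
          apply Fin.ext; simp only []; omega
        have : fyOut N k hk' j' ⟨N - 1 - (x : ℕ), ht⟩ = f (Fin.last k) := by
          unfold fyOut
          rw [hxeq, hx]
          exact Equiv.apply_symm_apply σ _
        rw [hj'] at this
        have := hf this
        have := congrArg Fin.val this
        simp at this
        omega
      set j : ∀ t : Fin (k+1), Fin (N - (t : ℕ)) :=
        Fin.lastCases (⟨(x : ℕ), hxlt⟩ : Fin (N - k)) j' with hj
      have hinit : (fun t : Fin k => j t.castSucc) = j' := by
        funext t
        simp only [hj, Fin.lastCases_castSucc]
      refine ⟨j, Set.mem_univ _, ?_⟩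
      funext t
      induction t using Fin.lastCases with
      | last =>
        rw [fyOut_last, hinit]
        have hjl : j (Fin.last k) = ⟨(x : ℕ), hxlt⟩ := by
          simp only [hj, Fin.lastCases_last]
        have : (⟨((j (Fin.last k)) : ℕ), by have := (j (Fin.last k)).isLt; omega⟩ : Fin N) = x := by
          apply Fin.ext
          simp [hjl]
        rw [this, hx]
        exact Equiv.apply_symm_apply σ _
      | cast t =>
        rw [fyOut_castSucc, hinit, hj']
        rfl


/-- The map sending a choice sequence `j` to its output tuple
`(fyPerm N k j (N-1), fyPerm N k j (N-2), …, fyPerm N k j (N-k))` is a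
bijection from the set of all choice sequences onto the set of injective
`k`-tuples of elements of `Fin N`. Consequently every ordered `k`-tuple of
pairwise distinct indices is produced by exactly one choice sequence, so
under uniform choices each such tuple occurs with probability
`1 / ∏_{t<k} (N - t)`: the partial Fisher–Yates shuffle samples an ordered
`k`-sample from `{0, …, N-1}` uniformly. -/
theorem fy_output_bijective (N k : ℕ) (hk : k ≤ N) :
    Set.BijOn
      (fun j : ∀ t : Fin k, Fin (N - (t : ℕ)) =>
        fun t : Fin k =>
          fyPerm N k j (⟨N - 1 - (t : ℕ), by have := t.isLt; omega⟩ : Fin N))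
      Set.univ
      {f : Fin k → Fin N | Function.Injective f} := by
  exact fy_bij N k hk
end

section
/- Let N and k be natural numbers with k ≤ N. For every subset S of Fin N with cardinality k, the number of choice sequences whose selected set equals S is exactly k!; consequently, under the uniform distribution on choice sequences, each k-element subset of {0,…,N−1} is the selected set with the same probability k!·(N−k)!/N! = 1/C(N,k), i.e. the partial Fisher–Yates shuffle selects a k-subset uniformly at random. -/
def phi (N k : ℕ) (hk : k ≤ N) (j : ∀ t : Fin k, Fin (N - (t : ℕ))) : Fin k → Fin N :=
  fun t => fyPerm N k j ⟨N - 1 - (t : ℕ), by have := t.isLt; omega⟩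

lemma phi_castSucc (N k : ℕ) (hk : k + 1 ≤ N) (j : ∀ t : Fin (k+1), Fin (N - (t : ℕ)))
    (t : Fin k) :
    phi N (k+1) hk j t.castSucc = phi N k (by omega) (fun t => j t.castSucc) t := by
  have hjl := (j (Fin.last k)).isLt
  have ht := t.isLt
  simp only [phi, fyPerm_succ, Equiv.Perm.mul_apply]
  congr 1
  rw [Equiv.swap_apply_of_ne_of_ne]
  · rfl
  · simp only [ne_eq, Fin.mk.injEq, Fin.coe_castSucc]; omega
  · simp only [ne_eq, Fin.mk.injEq, Fin.coe_castSucc]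
    simp only [Fin.val_last] at hjl
    omega

lemma phi_last (N k : ℕ) (hk : k + 1 ≤ N) (j : ∀ t : Fin (k+1), Fin (N - (t : ℕ))) :
    phi N (k+1) hk j (Fin.last k) =
      fyPerm N k (fun t => j t.castSucc)
        ⟨((j (Fin.last k)) : ℕ), by have := (j (Fin.last k)).isLt; omega⟩ := by
  simp only [phi, fyPerm_succ, Equiv.Perm.mul_apply]
  congr 1
  have : (⟨N - 1 - ((Fin.last k : Fin (k+1)) : ℕ), by have := (Fin.last k).isLt; omega⟩ : Fin N)
      = ⟨N - 1 - k, by have := (j (Fin.last k)).isLt; omega⟩ := by simp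
  rw [this, Equiv.swap_apply_left]

lemma phi_injective (N : ℕ) : ∀ (k : ℕ) (hk : k ≤ N), Function.Injective (phi N k hk) := by
  intro k
  induction k with
  | zero => intro hk j j' _; funext t; exact t.elim0
  | succ k ih =>
    intro hk j j' h
    have hinit : (fun t : Fin k => j t.castSucc) = (fun t : Fin k => j' t.castSucc) := by
      apply ih (by omega)
      funext t
      have h1 := congrFun h t.castSucc
      rwa [phi_castSucc N k hk j t, phi_castSucc N k hk j' t] at h1
    have hlast : j (Fin.last k) = j' (Fin.last k) := by
      have h2 := congrFun h (Fin.last k)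
      rw [phi_last N k hk j, phi_last N k hk j', hinit] at h2
      have := (fyPerm N k (fun t => j' t.castSucc)).injective h2
      rw [Fin.mk.injEq] at this
      exact Fin.ext this
    funext t
    induction t using Fin.lastCases with
    | last => exact hlast
    | cast s => exact congrFun hinit s

lemma selected_eq_image (N k : ℕ) (hk : k ≤ N) (j : ∀ t : Fin k, Fin (N - (t : ℕ))) :
    (Finset.univ.filter fun x : Fin N =>
        N - k ≤ (((fyPerm N k j)⁻¹ x : Fin N) : ℕ))
      = Finset.image (phi N k hk j) Finset.univ := by
  ext x
  simp only [Finset.mem_filter, Finset.mem_image, Finset.mem_univ, true_and]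
  constructor
  · intro hx
    have hlt := ((fyPerm N k j)⁻¹ x).isLt
    refine ⟨⟨N - 1 - (((fyPerm N k j)⁻¹ x : Fin N) : ℕ), by omega⟩, ?_⟩
    unfold phi
    have harg : (⟨N - 1 - ((⟨N - 1 - (((fyPerm N k j)⁻¹ x : Fin N) : ℕ), by omega⟩ : Fin k) : ℕ),
        by omega⟩ : Fin N) = (fyPerm N k j)⁻¹ x := Fin.ext (by simp only []; omega)
    rw [harg, show ∀ y, fyPerm N k j ((fyPerm N k j)⁻¹ y) = y from fun y => (Equiv.eq_symm_apply _).mp rfl]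
  · rintro ⟨t, rfl⟩
    have ht := t.isLt
    unfold phi
    rw [show ∀ y, (fyPerm N k j)⁻¹ (fyPerm N k j y) = y from fun y => Equiv.Perm.inv_eq_iff_eq.mpr rfl]
    simp only []
    omega


/-- For every `k`-element subset `S` of `Fin N`, the number of choice
sequences whose selected set `{x : Fin N | (fyPerm N k j)⁻¹ x ≥ N - k}`
equals `S` is exactly `k!`; consequently, under the uniform distribution on
the `∏_{t<k} (N - t) = N! / (N - k)!` choice sequences, each `k`-element
subset of `{0, …, N-1}` is the selected set with the same probability
`k! (N-k)! / N! = 1 / C(N, k)`: the partial Fisher–Yates shuffle selects a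
`k`-subset uniformly at random. -/
theorem fy_selected_set_uniform (N k : ℕ) (hk : k ≤ N) (S : Finset (Fin N))
    (hS : S.card = k) :
    (Finset.univ.filter fun j : ∀ t : Fin k, Fin (N - (t : ℕ)) =>
        (Finset.univ.filter fun x : Fin N =>
          N - k ≤ (((fyPerm N k j)⁻¹ x : Fin N) : ℕ)) = S).card
      = Nat.factorial k := by
  classical
  have hinj : ∀ j, Function.Injective (phi N k hk j) := by
    intro j a b hab
    unfold phi at hab
    have h2 := (fyPerm N k j).injective hab
    rw [Fin.mk.injEq] at h2
    have ha := a.isLt; have hb := b.isLt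
    exact Fin.ext (by omega)
  let F : (∀ t : Fin k, Fin (N - (t : ℕ))) → (Fin k ↪ Fin N) := fun j => ⟨phi N k hk j, hinj j⟩
  have hFinj : Function.Injective F := by
    intro j j' h
    exact phi_injective N k hk (congrArg (fun f : Fin k ↪ Fin N => f.toFun) h)
  have hcard : Fintype.card (∀ t : Fin k, Fin (N - (t : ℕ))) = Fintype.card (Fin k ↪ Fin N) := by
    rw [Fintype.card_pi, Fintype.card_embedding_eq]
    simp only [Fintype.card_fin]
    rw [Nat.descFactorial_eq_prod_range, Fin.prod_univ_eq_prod_range]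
  have hFbij : Function.Bijective F :=
    (Fintype.bijective_iff_injective_and_card F).2 ⟨hFinj, hcard⟩
  let e := Equiv.ofBijective F hFbij
  have key : ∀ j, ((Finset.univ.filter fun x : Fin N =>
          N - k ≤ (((fyPerm N k j)⁻¹ x : Fin N) : ℕ)) = S)
      ↔ Finset.image (⇑(e j)) Finset.univ = S := by
    intro j
    rw [selected_eq_image N k hk j]
    rfl
  rw [← Fintype.card_subtype]
  have e1 : {j : ∀ t : Fin k, Fin (N - (t : ℕ)) //
      (Finset.univ.filter fun x : Fin N =>
          N - k ≤ (((fyPerm N k j)⁻¹ x : Fin N) : ℕ)) = S}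
      ≃ {f : Fin k ↪ Fin N // Finset.image (⇑f) Finset.univ = S} :=
    e.subtypeEquiv key
  have e2 : {f : Fin k ↪ Fin N // Finset.image (⇑f) Finset.univ = S}
      ≃ (Fin k ↪ {x : Fin N // x ∈ S}) :=
  { toFun := fun p => ⟨fun i => ⟨p.1 i, by
        have h3 := Finset.mem_image_of_mem (⇑p.1) (Finset.mem_univ i)
        rw [p.2] at h3
        exact h3⟩,
      fun a b hab => p.1.injective (congrArg Subtype.val hab)⟩
    invFun := fun g => ⟨⟨fun i => (g i : Fin N),
        fun a b hab => g.injective (Subtype.ext hab)⟩, by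
      apply Finset.eq_of_subset_of_card_le
      · intro x hx
        simp only [Finset.mem_image, Finset.mem_univ, true_and] at hx
        obtain ⟨i, hi⟩ := hx
        rw [← hi]
        exact (g i).2
      · rw [hS]
        have : Function.Injective (fun i : Fin k => ((g i : Fin N))) :=
          fun a b hab => g.injective (Subtype.ext hab)
        show k ≤ (Finset.image (fun i : Fin k => ((g i : Fin N))) Finset.univ).card
        rw [Finset.card_image_of_injective _ this, Finset.card_univ, Fintype.card_fin]⟩
    left_inv := fun p => Subtype.ext (Function.Embedding.ext fun i => rfl)
    right_inv := fun g => Function.Embedding.ext fun i => Subtype.ext rfl }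
  rw [Fintype.card_congr (e1.trans e2), Fintype.card_embedding_eq, Fintype.card_fin]
  have hc : Fintype.card {x : Fin N // x ∈ S} = k := (Fintype.card_coe S).trans hS
  rw [hc, Nat.descFactorial_self]
end
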